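/- arXiv:2011.15019 — 5 statements merged into one kernel-verified Lean document; each statement's English description precedes it below -/
import Mathlib

section
/- Let G be a connected simple graph on a finite nonempty vertex set V, suppose G admits a burning sequence of length b ≥ 1, and let (s_1, s_2, …) be a farthest-first traversal of G. Then every sequence of length 3b − 2 whose first b entries are s_1, …, s_b (and whose remaining 2b − 2 entries are arbitrary vertices of V) is a burning sequence for G. In particular, for every vertex v ∈ V there exists an index i ∈ {1, …, b} with d(v, s_i) ≤ (3b − 2) − i. -/
/-- A sequence `s` (0-indexed; entry `j` plays the role of `s_{j+1}`) is a
burning sequence of length `k` for `G` if every vertex `v` is reachable from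
some entry `s j` (with `j < k`) at distance at most `k - (j+1)`. -/
def IsBurningSeq {V : Type*} (G : SimpleGraph V) (k : ℕ) (s : ℕ → V) : Prop :=
  ∀ v : V, ∃ j, j < k ∧ G.Reachable (s j) v ∧ G.dist (s j) v ≤ k - (j + 1)

/-- The set `{s_1, …, s_n}` of the first `n` entries of the sequence `s`. -/
def prefixSet {V : Type*} (s : ℕ → V) (n : ℕ) : Set V := s '' Set.Iio n

/-- Distance from a vertex to a set of vertices: `d(v,S) = min_{u ∈ S} d(v,u)`. -/
noncomputable def dSet {V : Type*} (G : SimpleGraph V) (v : V) (S : Set V) : ℕ :=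
  sInf (G.dist v '' S)

/-- `s` is a farthest-first traversal of `G`: for every `i ≥ 1` (0-indexed),
`s i` realizes the maximum distance to the set of previously chosen vertices. -/
def IsFFT {V : Type*} (G : SimpleGraph V) (s : ℕ → V) : Prop :=
  ∀ i : ℕ, 1 ≤ i →
    dSet G (s i) (prefixSet s i) = sSup (Set.range fun v : V => dSet G v (prefixSet s i))

/-- The burning number: the minimum length of a burning sequence for `G`. -/
noncomputable def burningNumber {V : Type*} (G : SimpleGraph V) : ℕ :=
  sInf {k | ∃ s : ℕ → V, IsBurningSeq G k s}

lemma dSet_le_of_mem {V : Type*} (G : SimpleGraph V) {v u : V} {S : Set V} (hu : u ∈ S) :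
    dSet G v S ≤ G.dist v u :=
  Nat.sInf_le ⟨u, hu, rfl⟩

lemma dSet_exists_mem {V : Type*} (G : SimpleGraph V) (v : V) {S : Set V} (hS : S.Nonempty) :
    ∃ y ∈ S, dSet G v S = G.dist v y := by
  obtain ⟨y, hy, hyd⟩ := Nat.sInf_mem (hS.image (G.dist v))
  exact ⟨y, hy, hyd.symm⟩

/-- if `G` is connected on a finite nonempty vertex set, admits a
burning sequence of length `b ≥ 1`, and `s` is a farthest-first traversal, then
every sequence of length `3b - 2` whose first `b` entries agree with `s` is a
burning sequence; in particular every vertex `v` has some `j < b` with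
`d(v, s j) ≤ (3b - 2) - (j + 1)`. -/
theorem stmt0 {V : Type*} [Fintype V] [Nonempty V] (G : SimpleGraph V) (hG : G.Connected)
    (b : ℕ) (hb : 1 ≤ b) (hex : ∃ u : ℕ → V, IsBurningSeq G b u)
    (s : ℕ → V) (hs : IsFFT G s) :
    (∀ t : ℕ → V, (∀ j, j < b → t j = s j) → IsBurningSeq G (3 * b - 2) t) ∧
    (∀ v : V, ∃ j, j < b ∧ G.dist v (s j) ≤ 3 * b - 2 - (j + 1)) := by
  classical
  obtain ⟨u, hu⟩ := hex
  set e : ℕ → ℕ := fun i => dSet G (s i) (prefixSet s i) with he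
  have hne : ∀ n : ℕ, 1 ≤ n → (prefixSet s n).Nonempty :=
    fun n hn => ⟨s 0, ⟨0, hn, rfl⟩⟩
  have hsub : ∀ m n : ℕ, m ≤ n → prefixSet s m ⊆ prefixSet s n :=
    fun m n hmn => Set.image_mono (f := s) (Set.Iio_subset_Iio hmn)
  -- `e` dominates `dSet G v (prefixSet s i)` for every vertex `v` (FFT property)
  have hmax : ∀ i : ℕ, 1 ≤ i → ∀ v : V, dSet G v (prefixSet s i) ≤ e i := by
    intro i hi v
    have h := le_csSup (Set.Finite.bddAbove
      (Set.finite_range fun v : V => dSet G v (prefixSet s i))) ⟨v, rfl⟩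
    rw [← hs i hi] at h
    exact h
  -- `e` is nonincreasing from index 1 on
  have emono : ∀ i : ℕ, 1 ≤ i → e (i + 1) ≤ e i := by
    intro i hi
    obtain ⟨y, hy, hyd⟩ := dSet_exists_mem G (s (i + 1)) (hne i hi)
    calc e (i + 1) ≤ G.dist (s (i + 1)) y :=
          dSet_le_of_mem G (hsub i (i + 1) (Nat.le_succ i) hy)
      _ = dSet G (s (i + 1)) (prefixSet s i) := hyd.symm
      _ ≤ e i := hmax i hi _
  have emono' : ∀ n j : ℕ, 1 ≤ j → e (j + n) ≤ e j := by
    intro n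
    induction n with
    | zero => intro j _; exact le_rfl
    | succ n ih =>
        intro j hj
        exact le_trans (emono (j + n) (by omega)) (ih j hj)
  have e_b_le : ∀ j : ℕ, 1 ≤ j → j ≤ b → e b ≤ e j := by
    intro j hj hjb
    have := emono' (b - j) j hj
    rwa [Nat.add_sub_cancel' hjb] at this
  -- pairwise distances among s 0, …, s b are at least e b
  have pair : ∀ i i' : ℕ, i < i' → i' ≤ b → e b ≤ G.dist (s i') (s i) := by
    intro i i' hii' hi'b
    have h1 : e i' ≤ G.dist (s i') (s i) :=
      dSet_le_of_mem G (⟨i, hii', rfl⟩ : s i ∈ prefixSet s i')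
    exact le_trans (e_b_le i' (by omega) hi'b) h1
  -- pigeonhole: two of s 0, …, s b lie in a common burning ball
  have hrb : e b ≤ 2 * b - 2 := by
    set f : Fin (b + 1) → ℕ := fun i => (hu (s i.1)).choose with hf
    have hflt : ∀ i, f i < b := fun i => (hu (s i.1)).choose_spec.1
    have hfd : ∀ i, G.dist (u (f i)) (s i.1) ≤ b - (f i + 1) :=
      fun i => (hu (s i.1)).choose_spec.2.2
    obtain ⟨i, i', hii', hfe⟩ := Fintype.exists_ne_map_eq_of_card_lt
      (fun i : Fin (b + 1) => (⟨f i, hflt i⟩ : Fin b)) (by simp)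
    have hk : f i = f i' := congrArg Fin.val hfe
    have hdi : G.dist (u (f i)) (s i.1) ≤ b - 1 := by
      have h1 := hfd i; have h2 := hflt i; omega
    have hdi' : G.dist (u (f i)) (s i'.1) ≤ b - 1 := by
      have h1 := hfd i'; have h2 := hflt i'; rw [hk]; omega
    have htri : G.dist (s i.1) (s i'.1) ≤ 2 * b - 2 := by
      calc G.dist (s i.1) (s i'.1)
          ≤ G.dist (s i.1) (u (f i)) + G.dist (u (f i)) (s i'.1) :=
            hG.dist_triangle
        _ ≤ (b - 1) + (b - 1) := by
            rw [SimpleGraph.dist_comm]; exact Nat.add_le_add hdi hdi'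
        _ ≤ 2 * b - 2 := by omega
    rcases lt_or_gt_of_ne (fun h : i.1 = i'.1 => hii' (Fin.ext h)) with h | h
    · have := pair i.1 i'.1 h (by omega)
      rw [SimpleGraph.dist_comm] at htri
      omega
    · have := pair i'.1 i.1 h (by omega)
      omega
  -- every vertex is within 2b-2 of some s j, j < b
  have key : ∀ v : V, ∃ j, j < b ∧ G.dist v (s j) ≤ 2 * b - 2 := by
    intro v
    obtain ⟨y, hy, hyd⟩ := dSet_exists_mem G v (hne b hb)
    obtain ⟨j, hj, hjy⟩ := hy
    refine ⟨j, hj, ?_⟩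
    rw [← hjy] at hyd
    calc G.dist v (s j) = dSet G v (prefixSet s b) := hyd.symm
      _ ≤ e b := hmax b hb v
      _ ≤ 2 * b - 2 := hrb
  constructor
  · intro t ht v
    obtain ⟨j, hj, hd⟩ := key v
    refine ⟨j, by omega, ?_, ?_⟩
    · rw [ht j hj]; exact hG.preconnected _ _
    · rw [ht j hj, G.dist_comm]; omega
  · intro v
    obtain ⟨j, hj, hd⟩ := key v
    exact ⟨j, hj, by omega⟩
end

section
/- Let G be a connected simple graph on a finite nonempty vertex set V with burning number b(G) (the minimum length of a burning sequence for G), and let (s_1, s_2, …) be any farthest-first traversal of G. Then there exists k with 1 ≤ k ≤ 3·b(G) − 2 such that the prefix (s_1, …, s_k) is a burning sequence for G. Consequently the BGP algorithm, which outputs the shortest burning prefix of a farthest-first traversal, returns a burning sequence of length at most (3 − 2/b(G))·b(G). -/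
lemma exists_burning {V : Type*} [Fintype V] [Nonempty V] (G : SimpleGraph V)
    (hG : G.Connected) : {k | ∃ s : ℕ → V, IsBurningSeq G k s}.Nonempty := by
  classical
  obtain ⟨v0⟩ := (inferInstance : Nonempty V)
  refine ⟨(Finset.univ.sup fun v => G.dist v0 v) + 1, fun _ => v0, fun v => ?_⟩
  refine ⟨0, by omega, hG.preconnected v0 v, ?_⟩
  simpa using Finset.le_sup (f := fun v => G.dist v0 v) (Finset.mem_univ v)

/-- for any farthest-first traversal `s` of a connected graph `G`
on a finite nonempty vertex set, some prefix of `s` of length `k` with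
`1 ≤ k ≤ 3·b(G) - 2` is a burning sequence; hence the BGP algorithm returns a
burning sequence of length at most `(3 - 2/b(G))·b(G) = 3·b(G) - 2`. -/
theorem stmt1 {V : Type*} [Fintype V] [Nonempty V] (G : SimpleGraph V) (hG : G.Connected)
    (s : ℕ → V) (hs : IsFFT G s) :
    ∃ k, 1 ≤ k ∧ k ≤ 3 * burningNumber G - 2 ∧ IsBurningSeq G k s := by
  classical
  set b := burningNumber G with hbdef
  have hbmem : b ∈ {k | ∃ s : ℕ → V, IsBurningSeq G k s} :=
    Nat.sInf_mem (exists_burning G hG)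
  obtain ⟨t, ht⟩ := hbmem
  have hb1 : 1 ≤ b := by
    obtain ⟨j, hj, -⟩ := ht (Classical.arbitrary V); omega
  set k := 3 * b - 2 with hkdef
  have hbk : b ≤ k := by omega
  refine ⟨k, by omega, le_rfl, ?_⟩
  by_contra hk
  unfold IsBurningSeq at hk
  push_neg at hk
  obtain ⟨v, hv⟩ := hk
  -- distance from v to s j is large
  have hvd : ∀ j, j < k → k - j ≤ G.dist (s j) v := by
    intro j hj
    have := hv j hj (hG.preconnected _ _)
    omega
  -- pairwise distances among the first b FFT points are large
  have hss : ∀ i j, i < j → j < b → 2 * b - 1 ≤ G.dist (s j) (s i) := by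
    intro i j hij hjb
    have hfft := hs j (by omega)
    have hne : (G.dist v '' prefixSet s j).Nonempty :=
      ⟨G.dist v (s 0), ⟨s 0, ⟨0, by simpa using (by omega : 0 < j)⟩, rfl⟩⟩
    have h1 : k - j + 1 ≤ dSet G v (prefixSet s j) := by
      refine le_csInf hne ?_
      rintro x ⟨u, ⟨i', hi', rfl⟩, rfl⟩
      simp only [Set.mem_Iio] at hi'
      have := hvd i' (by omega)
      have := SimpleGraph.dist_comm (G := G) (u := s i') (v := v)
      omega
    have h2 : dSet G v (prefixSet s j) ≤
        sSup (Set.range fun w : V => dSet G w (prefixSet s j)) :=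
      le_csSup (Set.Finite.bddAbove (Set.finite_range _)) ⟨v, rfl⟩
    have h3 : dSet G (s j) (prefixSet s j) ≤ G.dist (s j) (s i) :=
      Nat.sInf_le ⟨s i, ⟨i, by simpa using hij⟩, rfl⟩
    rw [hfft] at h3
    omega
  -- the b+1 points
  set f : Fin (b + 1) → V := fun i => if (i : ℕ) < b then s i else v with hfdef
  have hpair : ∀ i i' : Fin (b + 1), i ≠ i' → 2 * b - 1 ≤ G.dist (f i) (f i') := by
    intro i i' hne
    have hvs : ∀ j, j < b → 2 * b - 1 ≤ G.dist v (s j) := by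
      intro j hj
      have := hvd j (by omega)
      have := SimpleGraph.dist_comm (G := G) (u := s j) (v := v)
      omega
    rcases lt_trichotomy (i : ℕ) (i' : ℕ) with h | h | h
    · by_cases h' : (i' : ℕ) < b
      · have := hss i i' h h'
        have hc := SimpleGraph.dist_comm (G := G) (u := s (i' : ℕ)) (v := s (i : ℕ))
        simp only [hfdef, if_pos (lt_of_lt_of_le h (by omega) : (i:ℕ) < b), if_pos h']
        omega
      · have hib : (i : ℕ) < b := by omega
        have := hvs i hib
        have hc := SimpleGraph.dist_comm (G := G) (u := v) (v := s (i : ℕ))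
        simp only [hfdef, if_pos hib, if_neg h']
        omega
    · exact absurd (Fin.ext h) hne
    · by_cases h' : (i : ℕ) < b
      · have := hss i' i h h'
        simp only [hfdef, if_pos h', if_pos (lt_of_lt_of_le h (by omega) : (i':ℕ) < b)]
        omega
      · have hib : (i' : ℕ) < b := by omega
        have := hvs i' hib
        simp only [hfdef, if_neg h', if_pos hib]
        omega
  -- pigeonhole against the optimal burning sequence
  have hchoice : ∀ i : Fin (b + 1), ∃ j : Fin b, G.dist (t (j : ℕ)) (f i) ≤ b - 1 := by
    intro i
    obtain ⟨j, hj, -, hd⟩ := ht (f i)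
    exact ⟨⟨j, hj⟩, by simpa using hd.trans (by omega)⟩
  choose J hJ using hchoice
  obtain ⟨i, i', hii, hJi⟩ :=
    Fintype.exists_ne_map_eq_of_card_lt J (by simp)
  have htri := hG.dist_triangle (u := f i) (v := t (J i : ℕ)) (w := f i')
  have h1 := hJ i
  have h2 := hJ i'
  rw [hJi] at h1 htri
  have hc := SimpleGraph.dist_comm (G := G) (u := t (J i' : ℕ)) (v := f i)
  have := hpair i i' hii
  omega
end

section
/- Let G be a connected simple graph on a finite nonempty vertex set V, let r ≥ 0 be a natural number, and suppose there exists a set S* ⊆ V with |S*| ≤ b such that every vertex of V is within distance r of S*. If (s_1, s_2, …) is a farthest-first traversal of G, then every vertex of V is within distance 2r of the set {s_1, …, s_b}. -/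
lemma dSet_le_dist {V : Type*} (G : SimpleGraph V) (v : V) {S : Set V} {u : V}
    (hu : u ∈ S) : dSet G v S ≤ G.dist v u :=
  Nat.sInf_le ⟨u, hu, rfl⟩

lemma dSet_exists {V : Type*} (G : SimpleGraph V) (v : V) {S : Set V}
    (hS : S.Nonempty) : ∃ u ∈ S, dSet G v S = G.dist v u := by
  have := Nat.sInf_mem (hS.image (G.dist v))
  obtain ⟨u, hu, h⟩ := this
  exact ⟨u, hu, h.symm⟩


/-- if some set `S*` of at most `b` vertices covers every vertex
within radius `r`, then the first `b` vertices of any farthest-first traversal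
cover every vertex within radius `2r`. -/
theorem stmt2 {V : Type*} [Fintype V] [Nonempty V] (G : SimpleGraph V) (hG : G.Connected)
    (r b : ℕ) (Sstar : Finset V) (hcard : Sstar.card ≤ b)
    (hcov : ∀ v : V, ∃ u ∈ Sstar, G.dist v u ≤ r)
    (s : ℕ → V) (hs : IsFFT G s) :
    ∀ v : V, ∃ j, j < b ∧ G.dist v (s j) ≤ 2 * r := by
  -- b ≥ 1
  have hb : 1 ≤ b := by
    rcases hcov (Classical.arbitrary V) with ⟨u, hu, -⟩
    have : 0 < Sstar.card := Finset.card_pos.mpr ⟨u, hu⟩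
    omega
  by_contra hcon
  push_neg at hcon
  obtain ⟨v, hv⟩ := hcon
  -- prefix sets are nonempty for n ≥ 1
  have hpre : ∀ n : ℕ, 1 ≤ n → (prefixSet s n).Nonempty := fun n hn =>
    ⟨s 0, ⟨0, hn, rfl⟩⟩
  -- dSet v (prefix j) > 2r for 1 ≤ j ≤ b
  have hfar : ∀ j, 1 ≤ j → j ≤ b → 2 * r < dSet G v (prefixSet s j) := by
    intro j h1 h2
    obtain ⟨u, hu, hud⟩ := dSet_exists G v (hpre j h1)
    obtain ⟨i, hi, rfl⟩ := hu
    rw [hud]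
    exact hv i (lt_of_lt_of_le hi h2)
  -- pairwise: for i < j ≤ b, dist (s i) (s j) > 2r
  have hpair : ∀ i j, i < j → j ≤ b → 2 * r < G.dist (s i) (s j) := by
    intro i j hij hjb
    have h1 : 1 ≤ j := by omega
    have hle : dSet G v (prefixSet s j) ≤
        sSup (Set.range fun w : V => dSet G w (prefixSet s j)) := by
      apply le_csSup
      · exact (Set.finite_range _).bddAbove
      · exact ⟨v, rfl⟩
    have h2 : 2 * r < dSet G (s j) (prefixSet s j) := by
      rw [hs j h1]
      exact lt_of_lt_of_le (hfar j h1 hjb) hle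
    have h3 : dSet G (s j) (prefixSet s j) ≤ G.dist (s j) (s i) :=
      dSet_le_dist G (s j) ⟨i, hij, rfl⟩
    rw [SimpleGraph.dist_comm]
    omega
  -- pigeonhole on s 0, ..., s b
  choose f hf hfd using fun m : Fin (b + 1) => hcov (s m.1)
  obtain ⟨i, -, j, -, hij, hfij⟩ :=
    Finset.exists_ne_map_eq_of_card_lt_of_maps_to
      (s := (Finset.univ : Finset (Fin (b + 1)))) (t := Sstar)
      (by simpa using by omega) (fun m _ => hf m)
  wlog h : i < j generalizing i j
  · exact this j i (Ne.symm hij) hfij.symm (by omega)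
  have htri : G.dist (s i.1) (s j.1) ≤ G.dist (s i.1) (f i) + G.dist (f i) (s j.1) :=
    hG.dist_triangle
  have h1 : G.dist (f i) (s j.1) ≤ r := by
    rw [SimpleGraph.dist_comm, hfij]; exact hfd j
  have h2 := hpair i.1 j.1 h (by omega)
  have := hfd i
  omega
end

section
/- Let G be a connected simple graph on a finite nonempty vertex set V and let (s_1, s_2, …) be a farthest-first traversal of G. If there are indices i < j and a vertex w ∈ V with d(s_i, w) ≤ r and d(s_j, w) ≤ r, then every vertex of V is within distance 2r of the set {s_1, …, s_{j−1}}. -/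
/-- if two distinct vertices `s i`, `s j` (with `i < j`,
0-indexed) of a farthest-first traversal are both within distance `r` of some
vertex `w`, then every vertex of `V` is within distance `2r` of the set
`{s_1, …, s_{j-1}}` (1-indexed), i.e. of `{s l | l < j}` (0-indexed). -/
theorem stmt3 {V : Type*} [Fintype V] [Nonempty V] (G : SimpleGraph V) (hG : G.Connected)
    (s : ℕ → V) (hs : IsFFT G s) (r i j : ℕ) (hij : i < j) (w : V)
    (hi : G.dist (s i) w ≤ r) (hj : G.dist (s j) w ≤ r) :
    ∀ v : V, ∃ l, l < j ∧ G.dist v (s l) ≤ 2 * r := by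
  intro v
  have hjpos : 1 ≤ j := by omega
  have hmem : s i ∈ prefixSet s j := ⟨i, hij, rfl⟩
  have h1 : dSet G (s j) (prefixSet s j) ≤ 2 * r := by
    calc dSet G (s j) (prefixSet s j) ≤ G.dist (s j) (s i) :=
          Nat.sInf_le ⟨s i, hmem, rfl⟩
      _ ≤ G.dist (s j) w + G.dist w (s i) := hG.dist_triangle
      _ ≤ r + r := by
          have h := (SimpleGraph.dist_comm (G := G) (u := w) (v := s i))
          omega
      _ = 2 * r := by ring
  have hfft := hs j hjpos
  have h2 : dSet G v (prefixSet s j) ≤ 2 * r := by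
    have hle : dSet G v (prefixSet s j) ≤
        sSup (Set.range fun v : V => dSet G v (prefixSet s j)) :=
      le_csSup (Set.Finite.bddAbove (Set.finite_range _)) ⟨v, rfl⟩
    omega
  have hne : (G.dist v '' prefixSet s j).Nonempty := ⟨_, s i, hmem, rfl⟩
  have hmem2 := Nat.sInf_mem hne
  obtain ⟨u, ⟨l, hl, rfl⟩, hd⟩ := hmem2
  exact ⟨l, hl, by rw [hd]; exact h2⟩
end

section
/- Let G be a simple graph on a finite vertex set V and let k ≤ |V|. If G admits a burning sequence of length k (possibly with repeated vertices), then G admits an injective burning sequence of length k, i.e., a burning sequence (s_1, …, s_k) in which all k vertices are pairwise distinct. Consequently, the minimum length of a burning sequence with repetitions allowed equals the minimum length of an injective burning sequence. -/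
lemma burning_key {V : Type*} [Fintype V] (G : SimpleGraph V) (k : ℕ)
    (hk : k ≤ Fintype.card V) (h : ∃ s : ℕ → V, IsBurningSeq G k s) :
    ∃ s : ℕ → V, IsBurningSeq G k s ∧ Set.InjOn s (Set.Iio k) := by
  classical
  obtain ⟨s, hs⟩ := h
  set g : V → ℕ := fun u => sInf {j | j < k ∧ s j = u} with hgdef
  have hgmem : ∀ j, j < k → g (s j) < k ∧ s (g (s j)) = s j := by
    intro j hj
    have : g (s j) ∈ {j' | j' < k ∧ s j' = s j} := Nat.sInf_mem ⟨j, hj, rfl⟩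
    exact this
  have hgle : ∀ j, j < k → g (s j) ≤ j := fun j hj => Nat.sInf_le ⟨hj, rfl⟩
  have hgfix : ∀ j, j < k → g (s (g (s j))) = g (s j) := by
    intro j hj
    rw [(hgmem j hj).2]
  set I : Finset ℕ := (Finset.range k).filter (fun j => g (s j) = j) with hI
  set Img : Finset V := (Finset.range k).image s with hImg
  have hinjI : Set.InjOn s I := by
    intro a ha b hb hab
    simp only [hI, Finset.coe_filter, Set.mem_setOf_eq, Finset.mem_range] at ha hb
    rw [← ha.2, ← hb.2, hab]
  have hImgcard : Img.card = I.card := by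
    have himage : I.image s = Img := by
      apply Finset.Subset.antisymm
      · intro u hu
        simp only [Finset.mem_image] at hu ⊢
        obtain ⟨j, hj, rfl⟩ := hu
        simp only [hI, Finset.mem_filter, Finset.mem_range] at hj
        exact Finset.mem_image_of_mem s (Finset.mem_range.2 hj.1)
      · intro u hu
        simp only [hImg, Finset.mem_image, Finset.mem_range] at hu
        obtain ⟨j, hj, rfl⟩ := hu
        refine Finset.mem_image.2 ⟨g (s j), ?_, (hgmem j hj).2⟩
        simp only [hI, Finset.mem_filter, Finset.mem_range]
        exact ⟨(hgmem j hj).1, hgfix j hj⟩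
    rw [← himage, Finset.card_image_of_injOn hinjI]
  set R : Finset ℕ := (Finset.range k) \ I with hR
  have hIsub : I ⊆ Finset.range k := Finset.filter_subset _ _
  have hRcard : R.card = k - I.card := by
    rw [hR, Finset.card_sdiff_of_subset hIsub, Finset.card_range]
  have hcardle : Fintype.card ↥R ≤ Fintype.card ↥(Imgᶜ : Finset V) := by
    rw [Fintype.card_coe, Fintype.card_coe, Finset.card_compl, hRcard, hImgcard]
    omega
  obtain ⟨e⟩ := Function.Embedding.nonempty_of_card_le hcardle
  set t : ℕ → V := fun j => if hj : j ∈ R then (e ⟨j, hj⟩ : V) else s j with ht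
  have htR : ∀ j (hj : j ∈ R), t j = (e ⟨j, hj⟩ : V) := by
    intro j hj; simp only [ht, dif_pos hj]
  have htnR : ∀ j, j ∉ R → t j = s j := by
    intro j hj; simp only [ht, dif_neg hj]
  refine ⟨t, ?_, ?_⟩
  · intro v
    obtain ⟨j, hj, hreach, hdist⟩ := hs v
    refine ⟨g (s j), (hgmem j hj).1, ?_, ?_⟩
    · have : t (g (s j)) = s j := by
        rw [htnR, (hgmem j hj).2]
        simp only [hR, Finset.mem_sdiff, not_and, not_not]
        intro _
        simp only [hI, Finset.mem_filter, Finset.mem_range]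
        exact ⟨(hgmem j hj).1, hgfix j hj⟩
      rw [this]; exact hreach
    · have h1 : t (g (s j)) = s j := by
        rw [htnR, (hgmem j hj).2]
        simp only [hR, Finset.mem_sdiff, not_and, not_not]
        intro _
        simp only [hI, Finset.mem_filter, Finset.mem_range]
        exact ⟨(hgmem j hj).1, hgfix j hj⟩
      rw [h1]
      have hle := hgle j hj
      exact le_trans hdist (Nat.sub_le_sub_left (by omega) k)
  · intro a ha b hb hab
    simp only [Set.mem_Iio] at ha hb
    by_cases haR : a ∈ R <;> by_cases hbR : b ∈ R
    · rw [htR a haR, htR b hbR] at hab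
      have := e.injective (Subtype.ext hab)
      exact congrArg Subtype.val this
    · exfalso
      rw [htR a haR, htnR b hbR] at hab
      have h1 : (e ⟨a, haR⟩ : V) ∈ Imgᶜ := (e ⟨a, haR⟩).2
      rw [hab] at h1
      exact (Finset.mem_compl.1 h1) (Finset.mem_image.2 ⟨b, Finset.mem_range.2 hb, rfl⟩)
    · exfalso
      rw [htnR a haR, htR b hbR] at hab
      have h1 : (e ⟨b, hbR⟩ : V) ∈ Imgᶜ := (e ⟨b, hbR⟩).2
      rw [← hab] at h1
      exact (Finset.mem_compl.1 h1) (Finset.mem_image.2 ⟨a, Finset.mem_range.2 ha, rfl⟩)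
    · rw [htnR a haR, htnR b hbR] at hab
      have haI : a ∈ I := by
        by_contra hc
        exact haR (Finset.mem_sdiff.2 ⟨Finset.mem_range.2 ha, hc⟩)
      have hbI : b ∈ I := by
        by_contra hc
        exact hbR (Finset.mem_sdiff.2 ⟨Finset.mem_range.2 hb, hc⟩)
      exact hinjI haI hbI hab

/-- if `k ≤ |V|` and `G` admits a burning sequence of length `k`
(repetitions allowed), then it admits an injective one of the same length;
consequently the minimum length with repetitions allowed equals the minimum
length over injective burning sequences. -/
theorem stmt6 {V : Type*} [Fintype V] (G : SimpleGraph V) (k : ℕ)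
    (hk : k ≤ Fintype.card V) (h : ∃ s : ℕ → V, IsBurningSeq G k s) :
    (∃ s : ℕ → V, IsBurningSeq G k s ∧ Set.InjOn s (Set.Iio k)) ∧
    sInf {m | ∃ s : ℕ → V, IsBurningSeq G m s} =
      sInf {m | ∃ s : ℕ → V, IsBurningSeq G m s ∧ Set.InjOn s (Set.Iio m)} := by
  classical
  have h1 := burning_key G k hk h
  refine ⟨h1, ?_⟩
  have hne : {m | ∃ s : ℕ → V, IsBurningSeq G m s}.Nonempty := ⟨k, h⟩
  set m := sInf {m | ∃ s : ℕ → V, IsBurningSeq G m s} with hm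
  have hmem : m ∈ {m | ∃ s : ℕ → V, IsBurningSeq G m s} := Nat.sInf_mem hne
  have hmk : m ≤ k := Nat.sInf_le h
  have h2 := burning_key G m (le_trans hmk hk) hmem
  obtain ⟨s', hs', hinj'⟩ := h2
  have hne2 : {m | ∃ s : ℕ → V, IsBurningSeq G m s ∧ Set.InjOn s (Set.Iio m)}.Nonempty :=
    ⟨m, s', hs', hinj'⟩
  apply le_antisymm
  · have hmem2 := Nat.sInf_mem hne2
    obtain ⟨s'', hs'', -⟩ := hmem2
    exact Nat.sInf_le ⟨s'', hs''⟩
  · exact Nat.sInf_le ⟨s', hs', hinj'⟩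
end
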